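/- Let γ : ℝ → ℝ² be a smooth closed unit-speed self-shrinking curve with period ℓ. Then: (i) ∫₀^ℓ (|γ(t)|² − 2) e^{−|γ(t)|²/4} dt = 0; (ii) ∫₀^ℓ γ(t) e^{−|γ(t)|²/4} dt = 0 and ∫₀^ℓ γ(t)|γ(t)|² e^{−|γ(t)|²/4} dt = 0 (as identities in ℝ²); (iii) ∫₀^ℓ ( |γ(t)|⁴ − 12 + 16·H(t)² ) e^{−|γ(t)|²/4} dt = 0; and (iv) for every w ∈ ℝ², ∫₀^ℓ ⟨γ(t), w⟩² e^{−|γ(t)|²/4} dt = 2 ∫₀^ℓ ⟨γ′(t), w⟩² e^{−|γ(t)|²/4} dt. -/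

import Mathlib

noncomputable section
open Real MeasureTheory
open scoped RealInnerProductSpace

abbrev E2 := EuclideanSpace ℝ (Fin 2)

/-- The unit normal of a unit-speed plane curve: `γ′` rotated by `−π/2`. -/
def normal (γ : ℝ → E2) (t : ℝ) : E2 := WithLp.toLp 2 ![deriv γ t 1, -(deriv γ t 0)]

/-- The curvature `H = −⟨γ″, n⟩` of a unit-speed plane curve. -/
def curv (γ : ℝ → E2) (t : ℝ) : ℝ := -⟪deriv (deriv γ) t, normal γ t⟫

/-- The integral over a period of the derivative of a periodic function vanishes. -/
private lemma intper (F g : ℝ → ℝ) (ℓ : ℝ) (hF : ∀ t, HasDerivAt F (g t) t)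
    (hg : Continuous g) (hper : F ℓ = F 0) : ∫ t in (0:ℝ)..ℓ, g t = 0 := by
  rw [intervalIntegral.integral_eq_sub_of_hasDerivAt (fun t _ => hF t)
      (hg.intervalIntegrable 0 ℓ), hper, sub_self]

/-- Scalar core of the weighted integral identities. -/
private lemma scalarMain (ℓ : ℝ) (x y X Y : ℝ → ℝ)
    (hx : ∀ t, HasDerivAt x (X t) t) (hy : ∀ t, HasDerivAt y (Y t) t)
    (hX : ∀ t, HasDerivAt X (-((x t * Y t - y t * X t) / 2 * Y t)) t)
    (hY : ∀ t, HasDerivAt Y ((x t * Y t - y t * X t) / 2 * X t) t)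
    (hu : ∀ t, X t ^ 2 + Y t ^ 2 = 1)
    (px : ∀ t, x (t + ℓ) = x t) (py : ∀ t, y (t + ℓ) = y t)
    (pX : ∀ t, X (t + ℓ) = X t) (pY : ∀ t, Y (t + ℓ) = Y t) :
    (∫ t in (0:ℝ)..ℓ, (x t ^ 2 + y t ^ 2 - 2) * Real.exp (-(x t ^ 2 + y t ^ 2) / 4) = 0) ∧
    (∫ t in (0:ℝ)..ℓ, Real.exp (-(x t ^ 2 + y t ^ 2) / 4) * x t = 0) ∧
    (∫ t in (0:ℝ)..ℓ, Real.exp (-(x t ^ 2 + y t ^ 2) / 4) * y t = 0) ∧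
    (∫ t in (0:ℝ)..ℓ, (x t ^ 2 + y t ^ 2) * Real.exp (-(x t ^ 2 + y t ^ 2) / 4) * x t = 0) ∧
    (∫ t in (0:ℝ)..ℓ, (x t ^ 2 + y t ^ 2) * Real.exp (-(x t ^ 2 + y t ^ 2) / 4) * y t = 0) ∧
    (∫ t in (0:ℝ)..ℓ, ((x t ^ 2 + y t ^ 2) ^ 2 - 12 + 16 * ((x t * Y t - y t * X t) / 2) ^ 2) *
        Real.exp (-(x t ^ 2 + y t ^ 2) / 4) = 0) ∧
    (∀ w0 w1 : ℝ,
      ∫ t in (0:ℝ)..ℓ, (x t * w0 + y t * w1) ^ 2 * Real.exp (-(x t ^ 2 + y t ^ 2) / 4)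
        = 2 * ∫ t in (0:ℝ)..ℓ, (X t * w0 + Y t * w1) ^ 2 *
            Real.exp (-(x t ^ 2 + y t ^ 2) / 4)) := by
  have cx : Continuous x := continuous_iff_continuousAt.2 fun t => (hx t).continuousAt
  have cy : Continuous y := continuous_iff_continuousAt.2 fun t => (hy t).continuousAt
  have cX : Continuous X := continuous_iff_continuousAt.2 fun t => (hX t).continuousAt
  have cY : Continuous Y := continuous_iff_continuousAt.2 fun t => (hY t).continuousAt
  have cR : Continuous fun t => Real.exp (-(x t ^ 2 + y t ^ 2) / 4) := by
    have h : Continuous fun t => -(x t ^ 2 + y t ^ 2) / 4 :=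
      (((cx.pow 2).add (cy.pow 2)).neg).div_const 4
    exact Real.continuous_exp.comp h
  have hR : ∀ t, HasDerivAt (fun t => Real.exp (-(x t ^ 2 + y t ^ 2) / 4))
      (-(x t * X t + y t * Y t) / 2 * Real.exp (-(x t ^ 2 + y t ^ 2) / 4)) t := by
    intro t
    have h1 : HasDerivAt (fun s => -(x s ^ 2 + y s ^ 2) / 4)
        (-(x t * X t + y t * Y t) / 2) t := by
      have h := ((((hx t).pow 2).add ((hy t).pow 2)).neg).div_const 4
      exact h.congr_deriv (by ring)
    have h2 := h1.exp
    convert h2 using 1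
    ring
  have exl : x ℓ = x 0 := by simpa using px 0
  have eyl : y ℓ = y 0 := by simpa using py 0
  have eXl : X ℓ = X 0 := by simpa using pX 0
  have eYl : Y ℓ = Y 0 := by simpa using pY 0
  -- identity (i)
  have I1 : ∫ t in (0:ℝ)..ℓ, (x t ^ 2 + y t ^ 2 - 2) * Real.exp (-(x t ^ 2 + y t ^ 2) / 4) = 0 := by
    apply intper (fun t => -2 * ((x t * X t + y t * Y t) *
      Real.exp (-(x t ^ 2 + y t ^ 2) / 4)))
    · intro t
      have h := ((((hx t).mul (hX t)).add ((hy t).mul (hY t))).mul (hR t)).const_mul (-2)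
      refine h.congr_deriv (Eq.symm ?_)
      simp only [Pi.add_apply, Pi.mul_apply, Pi.pow_apply]
      linear_combination ((2 - x t ^ 2 - y t ^ 2) * Real.exp (-(x t ^ 2 + y t ^ 2) / 4)) * hu t
    · exact (((cx.pow 2).add (cy.pow 2)).sub continuous_const).mul cR
    · rw [exl, eyl, eXl, eYl]
  -- identity (ii), first coordinate of first vector identity
  have I2a : ∫ t in (0:ℝ)..ℓ, Real.exp (-(x t ^ 2 + y t ^ 2) / 4) * x t = 0 := by
    apply intper (fun t => -2 * (Real.exp (-(x t ^ 2 + y t ^ 2) / 4) * X t))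
    · intro t
      have h := ((hR t).mul (hX t)).const_mul (-2)
      refine h.congr_deriv (Eq.symm ?_)
      linear_combination (-(x t * Real.exp (-(x t ^ 2 + y t ^ 2) / 4))) * hu t
    · exact cR.mul cx
    · rw [exl, eyl, eXl]
  have I2b : ∫ t in (0:ℝ)..ℓ, Real.exp (-(x t ^ 2 + y t ^ 2) / 4) * y t = 0 := by
    apply intper (fun t => -2 * (Real.exp (-(x t ^ 2 + y t ^ 2) / 4) * Y t))
    · intro t
      have h := ((hR t).mul (hY t)).const_mul (-2)
      refine h.congr_deriv (Eq.symm ?_)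
      linear_combination (-(y t * Real.exp (-(x t ^ 2 + y t ^ 2) / 4))) * hu t
    · exact cR.mul cy
    · rw [exl, eyl, eYl]
  -- identity (ii), second vector identity
  have I3a : ∫ t in (0:ℝ)..ℓ, (x t ^ 2 + y t ^ 2) * Real.exp (-(x t ^ 2 + y t ^ 2) / 4) * x t
      = 0 := by
    apply intper (fun t => 2 * ((x t ^ 2 + y t ^ 2 - 4) *
        (Real.exp (-(x t ^ 2 + y t ^ 2) / 4) * X t))
      - 4 * ((x t * X t + y t * Y t) * (Real.exp (-(x t ^ 2 + y t ^ 2) / 4) * x t)))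
    · intro t
      have h := (((((hx t).pow 2).add ((hy t).pow 2)).sub_const 4).mul
          ((hR t).mul (hX t))).const_mul 2 |>.sub
        (((((hx t).mul (hX t)).add ((hy t).mul (hY t))).mul
          ((hR t).mul (hx t))).const_mul 4)
      refine h.congr_deriv (Eq.symm ?_)
      simp only [Pi.add_apply, Pi.mul_apply, Pi.pow_apply]
      linear_combination (-(x t * (x t ^ 2 + y t ^ 2) *
        Real.exp (-(x t ^ 2 + y t ^ 2) / 4))) * hu t
    · exact ((((cx.pow 2).add (cy.pow 2)).mul cR).mul cx)
    · rw [exl, eyl, eXl, eYl]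
  have I3b : ∫ t in (0:ℝ)..ℓ, (x t ^ 2 + y t ^ 2) * Real.exp (-(x t ^ 2 + y t ^ 2) / 4) * y t
      = 0 := by
    apply intper (fun t => 2 * ((x t ^ 2 + y t ^ 2 - 4) *
        (Real.exp (-(x t ^ 2 + y t ^ 2) / 4) * Y t))
      - 4 * ((x t * X t + y t * Y t) * (Real.exp (-(x t ^ 2 + y t ^ 2) / 4) * y t)))
    · intro t
      have h := (((((hx t).pow 2).add ((hy t).pow 2)).sub_const 4).mul
          ((hR t).mul (hY t))).const_mul 2 |>.sub
        (((((hx t).mul (hX t)).add ((hy t).mul (hY t))).mul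
          ((hR t).mul (hy t))).const_mul 4)
      refine h.congr_deriv (Eq.symm ?_)
      simp only [Pi.add_apply, Pi.mul_apply, Pi.pow_apply]
      linear_combination (-(y t * (x t ^ 2 + y t ^ 2) *
        Real.exp (-(x t ^ 2 + y t ^ 2) / 4))) * hu t
    · exact ((((cx.pow 2).add (cy.pow 2)).mul cR).mul cy)
    · rw [exl, eyl, eXl, eYl]
  -- identity (iii)
  have I4 : ∫ t in (0:ℝ)..ℓ, ((x t ^ 2 + y t ^ 2) ^ 2 - 12 +
      16 * ((x t * Y t - y t * X t) / 2) ^ 2) * Real.exp (-(x t ^ 2 + y t ^ 2) / 4) = 0 := by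
    apply intper (fun t => -2 * ((x t ^ 2 + y t ^ 2 + 6) *
      ((x t * X t + y t * Y t) * Real.exp (-(x t ^ 2 + y t ^ 2) / 4))))
    · intro t
      have h := (((((hx t).pow 2).add ((hy t).pow 2)).add_const 6).mul
        ((((hx t).mul (hX t)).add ((hy t).mul (hY t))).mul (hR t))).const_mul (-2)
      refine h.congr_deriv (Eq.symm ?_)
      simp only [Pi.add_apply, Pi.mul_apply, Pi.pow_apply]
      linear_combination ((12 - (x t ^ 2 + y t ^ 2) ^ 2) *
        Real.exp (-(x t ^ 2 + y t ^ 2) / 4)) * hu t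
    · apply Continuous.mul _ cR
      have cH : Continuous fun t => (x t * Y t - y t * X t) / 2 :=
        ((cx.mul cY).sub (cy.mul cX)).div_const 2
      exact ((((cx.pow 2).add (cy.pow 2)).pow 2).sub continuous_const).add
        ((continuous_const).mul (cH.pow 2))
    · rw [exl, eyl, eXl, eYl]
  -- identity (iv)
  have I5 : ∀ w0 w1 : ℝ,
      ∫ t in (0:ℝ)..ℓ, (x t * w0 + y t * w1) ^ 2 * Real.exp (-(x t ^ 2 + y t ^ 2) / 4)
        = 2 * ∫ t in (0:ℝ)..ℓ, (X t * w0 + Y t * w1) ^ 2 *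
            Real.exp (-(x t ^ 2 + y t ^ 2) / 4) := by
    intro w0 w1
    have ca : Continuous fun t => (x t * w0 + y t * w1) ^ 2 *
        Real.exp (-(x t ^ 2 + y t ^ 2) / 4) :=
      (((cx.mul continuous_const).add (cy.mul continuous_const)).pow 2).mul cR
    have cb : Continuous fun t => (X t * w0 + Y t * w1) ^ 2 *
        Real.exp (-(x t ^ 2 + y t ^ 2) / 4) :=
      (((cX.mul continuous_const).add (cY.mul continuous_const)).pow 2).mul cR
    have J : ∫ t in (0:ℝ)..ℓ, ((x t * w0 + y t * w1) ^ 2 *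
        Real.exp (-(x t ^ 2 + y t ^ 2) / 4)
        - 2 * ((X t * w0 + Y t * w1) ^ 2 * Real.exp (-(x t ^ 2 + y t ^ 2) / 4))) = 0 := by
      apply intper (fun t => -2 * (((x t * w0 + y t * w1) * (X t * w0 + Y t * w1)) *
        Real.exp (-(x t ^ 2 + y t ^ 2) / 4)))
      · intro t
        have ha := ((hx t).mul_const w0).add ((hy t).mul_const w1)
        have hb := ((hX t).mul_const w0).add ((hY t).mul_const w1)
        have h := ((ha.mul hb).mul (hR t)).const_mul (-2)
        refine h.congr_deriv (Eq.symm ?_)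
        simp only [Pi.add_apply, Pi.mul_apply, Pi.pow_apply]
        linear_combination (-((x t * w0 + y t * w1) ^ 2 *
          Real.exp (-(x t ^ 2 + y t ^ 2) / 4))) * hu t
      · exact ca.sub (continuous_const.mul cb)
      · rw [exl, eyl, eXl, eYl]
    rw [intervalIntegral.integral_sub (ca.intervalIntegrable 0 ℓ)
      ((show Continuous fun t => 2 * ((X t * w0 + Y t * w1) ^ 2 * Real.exp (-(x t ^ 2 + y t ^ 2) / 4)) from continuous_const.mul cb).intervalIntegrable 0 ℓ),
      intervalIntegral.integral_const_mul] at J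
    linarith
  exact ⟨I1, I2a, I2b, I3a, I3b, I4, I5⟩

/-- Weighted integral identities on a smooth closed unit-speed
self-shrinking curve in the plane. -/
theorem stmt5 (γ : ℝ → E2) (hγ : ContDiff ℝ (⊤ : ℕ∞) γ)
    (hunit : ∀ t, ‖deriv γ t‖ = 1)
    (ℓ : ℝ) (hℓ : 0 < ℓ) (hper : ∀ t, γ (t + ℓ) = γ t)
    (hshrink : ∀ t, curv γ t = ⟪γ t, normal γ t⟫ / 2) :
    (∫ t in (0:ℝ)..ℓ, (‖γ t‖ ^ 2 - 2) * Real.exp (-‖γ t‖ ^ 2 / 4) = 0) ∧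
    ((∫ t in (0:ℝ)..ℓ, Real.exp (-‖γ t‖ ^ 2 / 4) • γ t) = (0 : E2)) ∧
    ((∫ t in (0:ℝ)..ℓ, (‖γ t‖ ^ 2 * Real.exp (-‖γ t‖ ^ 2 / 4)) • γ t) = (0 : E2)) ∧
    (∫ t in (0:ℝ)..ℓ, (‖γ t‖ ^ 4 - 12 + 16 * curv γ t ^ 2) * Real.exp (-‖γ t‖ ^ 2 / 4) = 0) ∧
    (∀ w : E2,
      ∫ t in (0:ℝ)..ℓ, ⟪γ t, w⟫ ^ 2 * Real.exp (-‖γ t‖ ^ 2 / 4)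
        = 2 * ∫ t in (0:ℝ)..ℓ, ⟪deriv γ t, w⟫ ^ 2 * Real.exp (-‖γ t‖ ^ 2 / 4)) := by
  have hγdiff : Differentiable ℝ γ := hγ.differentiable (by simp)
  have hγ'cd : ContDiff ℝ (⊤ : ℕ∞) (deriv γ) := (contDiff_infty_iff_deriv.mp hγ).2
  have hγ'diff : Differentiable ℝ (deriv γ) := hγ'cd.differentiable (by simp)
  -- component derivatives
  have hx : ∀ t, HasDerivAt (fun t => γ t 0) (deriv γ t 0) t := fun t =>
    (EuclideanSpace.proj (0 : Fin 2) : E2 →L[ℝ] ℝ).hasFDerivAt.comp_hasDerivAt t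
      (hγdiff t).hasDerivAt
  have hy : ∀ t, HasDerivAt (fun t => γ t 1) (deriv γ t 1) t := fun t =>
    (EuclideanSpace.proj (1 : Fin 2) : E2 →L[ℝ] ℝ).hasFDerivAt.comp_hasDerivAt t
      (hγdiff t).hasDerivAt
  have hX0 : ∀ t, HasDerivAt (fun t => deriv γ t 0) (deriv (deriv γ) t 0) t := fun t =>
    (EuclideanSpace.proj (0 : Fin 2) : E2 →L[ℝ] ℝ).hasFDerivAt.comp_hasDerivAt t
      (hγ'diff t).hasDerivAt
  have hY0 : ∀ t, HasDerivAt (fun t => deriv γ t 1) (deriv (deriv γ) t 1) t := fun t =>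
    (EuclideanSpace.proj (1 : Fin 2) : E2 →L[ℝ] ℝ).hasFDerivAt.comp_hasDerivAt t
      (hγ'diff t).hasDerivAt
  -- the unit-speed condition in coordinates
  have hunit2 : ∀ t, (deriv γ t 0) ^ 2 + (deriv γ t 1) ^ 2 = 1 := by
    intro t
    have h := hunit t
    rw [EuclideanSpace.norm_eq, Real.sqrt_eq_one] at h
    simpa [Fin.sum_univ_two, Real.norm_eq_abs, sq_abs] using h
  -- squared norm in coordinates
  have hnorm : ∀ t, ‖γ t‖ ^ 2 = (γ t 0) ^ 2 + (γ t 1) ^ 2 := by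
    intro t
    rw [EuclideanSpace.norm_eq, Real.sq_sqrt (by positivity)]
    simp [Fin.sum_univ_two, Real.norm_eq_abs, sq_abs]
  have hnorm4 : ∀ t, ‖γ t‖ ^ 4 = ((γ t 0) ^ 2 + (γ t 1) ^ 2) ^ 2 := by
    intro t
    have h := hnorm t
    nlinarith [h]
  -- the self-shrinker equation in coordinates
  have hCs : ∀ t, deriv (deriv γ) t 1 * deriv γ t 0 - deriv (deriv γ) t 0 * deriv γ t 1
      = (γ t 0 * deriv γ t 1 - γ t 1 * deriv γ t 0) / 2 := by
    intro t
    have h := hshrink t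
    simp only [curv, normal, PiLp.inner_apply, RCLike.inner_apply, conj_trivial,
      Fin.sum_univ_two, Matrix.cons_val_zero, Matrix.cons_val_one, Matrix.head_cons,
      map_mul] at h
    ring_nf at h ⊢
    linarith
  -- orthogonality of acceleration and velocity
  have hB : ∀ t, 2 * deriv γ t 0 ^ 1 * deriv (deriv γ) t 0
      + 2 * deriv γ t 1 ^ 1 * deriv (deriv γ) t 1 = 0 := by
    intro t
    have hconst : HasDerivAt (fun t => (deriv γ t 0) ^ 2 + (deriv γ t 1) ^ 2) 0 t := by
      have he : (fun t => (deriv γ t 0) ^ 2 + (deriv γ t 1) ^ 2) = fun _ => (1:ℝ) :=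
        funext hunit2
      rw [he]
      exact hasDerivAt_const t 1
    exact (((hX0 t).pow 2).add ((hY0 t).pow 2)).unique hconst
  -- acceleration components
  have e0 : ∀ t, deriv (deriv γ) t 0
      = -((γ t 0 * deriv γ t 1 - γ t 1 * deriv γ t 0) / 2 * deriv γ t 1) := by
    intro t
    linear_combination (deriv γ t 0 / 2) * hB t - deriv γ t 1 * hCs t
      - deriv (deriv γ) t 0 * hunit2 t
  have e1 : ∀ t, deriv (deriv γ) t 1
      = (γ t 0 * deriv γ t 1 - γ t 1 * deriv γ t 0) / 2 * deriv γ t 0 := by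
    intro t
    linear_combination (deriv γ t 1 / 2) * hB t + deriv γ t 0 * hCs t
      - deriv (deriv γ) t 1 * hunit2 t
  have hX : ∀ t, HasDerivAt (fun t => deriv γ t 0)
      (-((γ t 0 * deriv γ t 1 - γ t 1 * deriv γ t 0) / 2 * deriv γ t 1)) t := fun t =>
    e0 t ▸ hX0 t
  have hY : ∀ t, HasDerivAt (fun t => deriv γ t 1)
      ((γ t 0 * deriv γ t 1 - γ t 1 * deriv γ t 0) / 2 * deriv γ t 0) t := fun t =>
    e1 t ▸ hY0 t
  -- periodicity
  have hper' : ∀ t, deriv γ (t + ℓ) = deriv γ t := by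
    intro t
    have h1 : deriv (fun s => γ (s + ℓ)) t = deriv γ (t + ℓ) := deriv_comp_add_const γ ℓ t
    have h2 : (fun s => γ (s + ℓ)) = γ := funext hper
    rw [h2] at h1
    exact h1.symm
  have px : ∀ t, γ (t + ℓ) 0 = γ t 0 := fun t => by rw [hper t]
  have py : ∀ t, γ (t + ℓ) 1 = γ t 1 := fun t => by rw [hper t]
  have pX : ∀ t, deriv γ (t + ℓ) 0 = deriv γ t 0 := fun t => by rw [hper' t]
  have pY : ∀ t, deriv γ (t + ℓ) 1 = deriv γ t 1 := fun t => by rw [hper' t]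
  obtain ⟨I1, I2a, I2b, I3a, I3b, I4, I5⟩ :=
    scalarMain ℓ (fun t => γ t 0) (fun t => γ t 1)
      (fun t => deriv γ t 0) (fun t => deriv γ t 1)
      hx hy hX hY hunit2 px py pX pY
  -- curvature in coordinates
  have hcurveq : ∀ t, curv γ t
      = (γ t 0 * deriv γ t 1 - γ t 1 * deriv γ t 0) / 2 := by
    intro t
    rw [hshrink t]
    simp only [normal, PiLp.inner_apply, RCLike.inner_apply, conj_trivial,
      Fin.sum_univ_two, Matrix.cons_val_zero, Matrix.cons_val_one, Matrix.head_cons]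
    ring
  have hγc : Continuous γ := hγ.continuous
  have cw : Continuous fun t => Real.exp (-‖γ t‖ ^ 2 / 4) := by
    have h : Continuous fun t => -‖γ t‖ ^ 2 / 4 := ((hγc.norm.pow 2).neg).div_const 4
    exact Real.continuous_exp.comp h
  refine ⟨?_, ?_, ?_, ?_, ?_⟩
  · simp only [hnorm]
    exact I1
  · have hint : IntervalIntegrable (fun t => Real.exp (-‖γ t‖ ^ 2 / 4) • γ t)
        volume 0 ℓ := (cw.smul hγc).intervalIntegrable 0 ℓ
    have comp : ∀ i : Fin 2, (∫ t in (0:ℝ)..ℓ, Real.exp (-‖γ t‖ ^ 2 / 4) • γ t) i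
        = ∫ t in (0:ℝ)..ℓ, Real.exp (-‖γ t‖ ^ 2 / 4) * γ t i := by
      intro i
      have h := (EuclideanSpace.proj (𝕜 := ℝ) i).intervalIntegral_comp_comm hint
      simpa using h.symm
    ext i
    rw [comp i]
    fin_cases i
    · simpa [hnorm] using I2a
    · simpa [hnorm] using I2b
  · have hint : IntervalIntegrable
        (fun t => (‖γ t‖ ^ 2 * Real.exp (-‖γ t‖ ^ 2 / 4)) • γ t) volume 0 ℓ :=
      (((hγc.norm.pow 2).mul cw).smul hγc).intervalIntegrable 0 ℓ
    have comp : ∀ i : Fin 2,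
        (∫ t in (0:ℝ)..ℓ, (‖γ t‖ ^ 2 * Real.exp (-‖γ t‖ ^ 2 / 4)) • γ t) i
        = ∫ t in (0:ℝ)..ℓ, ‖γ t‖ ^ 2 * Real.exp (-‖γ t‖ ^ 2 / 4) * γ t i := by
      intro i
      have h := (EuclideanSpace.proj (𝕜 := ℝ) i).intervalIntegral_comp_comm hint
      simpa [mul_assoc] using h.symm
    ext i
    rw [comp i]
    fin_cases i
    · simpa [hnorm] using I3a
    · simpa [hnorm] using I3b
  · simp only [hnorm4, hnorm, hcurveq]
    exact I4
  · intro w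
    have hip : ∀ v : E2, ⟪v, w⟫ = v 0 * w 0 + v 1 * w 1 := fun v => by
      simp [PiLp.inner_apply, RCLike.inner_apply, Fin.sum_univ_two]
      ring
    simp only [hip, hnorm]
    exact I5 (w 0) (w 1)
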